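/- Let G be a finite simple bipartite graph with parts V and W (every edge of G joins a vertex of V to a vertex of W). Then Σ_{v ∈ V} E_G(v) = Σ_{w ∈ W} E_G(w); that is, the energy of a bipartite graph is divided evenly between its two parts. -/

import Mathlib

open Matrix Finset

section Aux
open Polynomial

variable {m : Type*} [Fintype m] [DecidableEq m]

private lemma my_charpoly_mul_comm (M N : Matrix m m ℝ) :
    (M * N).charpoly = (N * M).charpoly := by
  have hinj : Function.Injective (algebraMap ℝ[X] (FractionRing ℝ[X])) :=
    IsFractionRing.injective _ _
  apply hinj
  set f := algebraMap ℝ[X] (FractionRing ℝ[X]) with hf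
  set t : FractionRing ℝ[X] := f X with ht
  have htne : t ≠ 0 := by
    simpa [ht, map_eq_zero_iff f hinj] using X_ne_zero (R := ℝ)
  set g : ℝ →+* FractionRing ℝ[X] := f.comp C with hg
  have key : ∀ P Q : Matrix m m ℝ,
      f ((P * Q).charpoly) =
        t ^ Fintype.card m * det (1 + (-t⁻¹) • ((P.map g) * (Q.map g))) := by
    intro P Q
    rw [Matrix.charpoly, RingHom.map_det]
    have h1 : (f.mapMatrix (charmatrix (P * Q)) : Matrix m m _) =
        t • (1 + (-t⁻¹) • ((P.map g) * (Q.map g))) := by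
      have hmapmul : (P * Q).map (g : ℝ →+* _) = (P.map g) * (Q.map g) := Matrix.map_mul
      ext i j
      have hpq : ((P.map g) * (Q.map g)) i j = f (C ((P * Q) i j)) := by
        rw [← hmapmul]; rfl
      by_cases hij : i = j
      · subst hij
        simp only [RingHom.mapMatrix_apply, Matrix.map_apply, charmatrix_apply_eq, map_sub,
          Matrix.smul_apply, Matrix.add_apply, Matrix.one_apply_eq, hpq, smul_eq_mul]
        field_simp
        rw [← sub_eq_add_neg, ht]
      · simp only [RingHom.mapMatrix_apply, Matrix.map_apply, charmatrix_apply_ne _ _ _ hij,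
          map_neg, Matrix.smul_apply, Matrix.add_apply, Matrix.one_apply_ne hij, hpq,
          smul_eq_mul]
        field_simp
        ring
    rw [h1, det_smul]
  rw [key M N, key N M, ← Matrix.smul_mul, det_one_add_mul_comm, Matrix.mul_smul]

private lemma my_charpoly_conj (P Q D : Matrix m m ℝ) (hPQ : P * Q = 1) :
    (P * D * Q).charpoly = D.charpoly := by
  unfold Matrix.charpoly
  have hmap : ∀ (A B : Matrix m m ℝ), (A * B).map (C : ℝ →+* ℝ[X]) = A.map C * B.map C :=
    fun A B => Matrix.map_mul
  have hone : (1 : Matrix m m ℝ).map (C : ℝ →+* ℝ[X]) = 1 :=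
    Matrix.map_one _ (map_zero C) (map_one C)
  have hc : charmatrix (P * D * Q) =
      (P.map C) * charmatrix D * (Q.map C) := by
    have hcomm : ∀ (A : Matrix m m ℝ[X]),
        A * (diagonal fun _ => (X : ℝ[X])) = (diagonal fun _ => (X : ℝ[X])) * A := by
      intro A; ext i j; rw [mul_diagonal, diagonal_mul, mul_comm]
    rw [charmatrix, charmatrix]
    simp only [RingHom.mapMatrix_apply]
    rw [mul_sub, sub_mul]
    congr 1
    · rw [scalar_apply, hcomm (P.map C), mul_assoc, ← hmap, hPQ, hone, mul_one]
    · rw [← hmap, ← hmap]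
  have hdet1 : det (P.map (C : ℝ →+* ℝ[X])) * det (Q.map C) = 1 := by
    rw [← det_mul, ← hmap, hPQ, hone, det_one]
  rw [hc, det_mul, det_mul, mul_right_comm, hdet1, one_mul]

private lemma my_charpoly_hermitian (X : Matrix m m ℝ) (hX : X.IsHermitian) :
    X.charpoly = ∏ i, (Polynomial.X - Polynomial.C (hX.eigenvalues i)) := by
  have hspec := hX.spectral_theorem
  have hUU : (hX.eigenvectorUnitary : Matrix m m ℝ) * (star hX.eigenvectorUnitary : Matrix m m ℝ) = 1 :=
    Unitary.coe_mul_star_self _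
  have h1 : X.charpoly = (diagonal (RCLike.ofReal ∘ hX.eigenvalues) : Matrix m m ℝ).charpoly := by
    conv_lhs => rw [hspec, Unitary.conjStarAlgAut_apply]
    exact my_charpoly_conj _ _ _ hUU
  rw [h1]
  have h2 : (RCLike.ofReal ∘ hX.eigenvalues : m → ℝ) = hX.eigenvalues := by
    rw [RCLike.ofReal_real_eq_id, Function.id_comp]
  rw [h2]
  have h3 : charmatrix (diagonal hX.eigenvalues) =
      diagonal (fun i => (Polynomial.X : ℝ[X]) - Polynomial.C (hX.eigenvalues i)) := by
    apply Matrix.ext; intro i j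
    by_cases hij : i = j
    · subst hij; simp [charmatrix_apply_eq]
    · rw [charmatrix_apply_ne _ _ _ hij, diagonal_apply_ne _ hij, diagonal_apply_ne _ hij,
        map_zero, neg_zero]
  rw [Matrix.charpoly, h3, det_diagonal]

/-- Square root of a positive semidefinite real matrix via the spectral theorem. -/
noncomputable def Matrix.PosSemidef.sqrt {X : Matrix m m ℝ} (hX : X.PosSemidef) : Matrix m m ℝ :=
  hX.1.eigenvectorUnitary.1 * diagonal ((RCLike.ofReal : ℝ → ℝ) ∘ (√·) ∘ hX.1.eigenvalues) *
    (star hX.1.eigenvectorUnitary : Matrix m m ℝ)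

open scoped MatrixOrder in
private lemma my_sqrt_eq_cfc {X : Matrix m m ℝ} (hX : X.PosSemidef) : hX.sqrt = CFC.sqrt X := by
  have h0 : 0 ≤ X := hX.nonneg
  rw [CFC.sqrt_eq_real_sqrt X h0, cfcₙ_eq_cfc (hf0 := Real.sqrt_zero), hX.1.cfc_eq]
  rfl

open scoped MatrixOrder in
lemma Matrix.PosSemidef.posSemidef_sqrt {X : Matrix m m ℝ} (hX : X.PosSemidef) :
    hX.sqrt.PosSemidef := by
  rw [my_sqrt_eq_cfc]; exact (CFC.sqrt_nonneg X).posSemidef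

open scoped MatrixOrder in
lemma Matrix.PosSemidef.sqrt_mul_self {X : Matrix m m ℝ} (hX : X.PosSemidef) :
    hX.sqrt * hX.sqrt = X := by
  rw [my_sqrt_eq_cfc]; exact CFC.sqrt_mul_sqrt_self X hX.nonneg

open scoped MatrixOrder in
lemma Matrix.PosSemidef.eq_sqrt_of_sq_eq {Y : Matrix m m ℝ} (hY : Y.PosSemidef)
    {X : Matrix m m ℝ} (hX : X.PosSemidef) (h : Y ^ 2 = X) : Y = hX.sqrt := by
  rw [my_sqrt_eq_cfc]
  exact (CFC.sqrt_unique (by rw [← pow_two, h]) hY.nonneg).symm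
private lemma my_trace_sqrt {X : Matrix m m ℝ} (hX : X.PosSemidef) :
    hX.sqrt.trace = ∑ i, Real.sqrt (hX.1.eigenvalues i) := by
  rw [Matrix.PosSemidef.sqrt, Matrix.trace_mul_cycle,
    Unitary.coe_star_mul_self, one_mul, trace_diagonal]
  simp [Function.comp, RCLike.ofReal_real_eq_id]

private lemma my_roots_prod (lam : m → ℝ) :
    (∏ i, (Polynomial.X - Polynomial.C (lam i))).roots = Multiset.map lam Finset.univ.val := by
  have h := Polynomial.roots_multiset_prod_X_sub_C (Multiset.map lam Finset.univ.val)
  rw [Multiset.map_map] at h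
  rw [Finset.prod_eq_multiset_prod]
  exact h

private lemma my_trace_sqrt_eq (B : Matrix m m ℝ) :
    (Matrix.posSemidef_self_mul_conjTranspose B).sqrt.trace =
    (Matrix.posSemidef_conjTranspose_mul_self B).sqrt.trace := by
  rw [my_trace_sqrt, my_trace_sqrt]
  have e1 := my_charpoly_hermitian _ (Matrix.posSemidef_self_mul_conjTranspose B).1
  have e2 := my_charpoly_hermitian _ (Matrix.posSemidef_conjTranspose_mul_self B).1
  have hchar := my_charpoly_mul_comm B Bᴴ
  have h1 : Multiset.map (Matrix.posSemidef_self_mul_conjTranspose B).1.eigenvalues Finset.univ.val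
      = Multiset.map (Matrix.posSemidef_conjTranspose_mul_self B).1.eigenvalues Finset.univ.val := by
    rw [← my_roots_prod, ← my_roots_prod, ← e1, ← e2, hchar]
  rw [Finset.sum_eq_multiset_sum, Finset.sum_eq_multiset_sum]
  have h2 : ∀ lam : m → ℝ, Multiset.map (fun i => Real.sqrt (lam i)) Finset.univ.val
      = Multiset.map Real.sqrt (Multiset.map lam Finset.univ.val) := by
    intro lam; rw [Multiset.map_map]; rfl
  rw [h2, h2, h1]

end Aux

/-- The energy of the vertex `i` of a finite simple graph `G`:
the `(i,i)` entry of `|A| = (A Aᴴ)^{1/2}`, where `A` is the adjacency matrix. -/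
noncomputable def vertexEnergy {n : ℕ} (G : SimpleGraph (Fin n)) [DecidableRel G.Adj]
    (i : Fin n) : ℝ :=
  ((Matrix.posSemidef_self_mul_conjTranspose (G.adjMatrix ℝ)).1.eigenvectorUnitary.1 *
      diagonal ((RCLike.ofReal : ℝ → ℝ) ∘ (√·) ∘ (Matrix.posSemidef_self_mul_conjTranspose (G.adjMatrix ℝ)).1.eigenvalues) *
      (star (Matrix.posSemidef_self_mul_conjTranspose (G.adjMatrix ℝ)).1.eigenvectorUnitary :
        Matrix (Fin n) (Fin n) ℝ)) i i

theorem stmt_8 {n : ℕ} (G : SimpleGraph (Fin n)) [DecidableRel G.Adj]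
    (V W : Finset (Fin n)) (hdisj : Disjoint V W) (hcover : V ∪ W = Finset.univ)
    (hbip : ∀ u v : Fin n, G.Adj u v → (u ∈ V ∧ v ∈ W) ∨ (u ∈ W ∧ v ∈ V)) :
    ∑ v ∈ V, vertexEnergy G v = ∑ w ∈ W, vertexEnergy G w := by
  set A : Matrix (Fin n) (Fin n) ℝ := G.adjMatrix ℝ with hA
  have hAH : Aᴴ = A := by
    ext i j
    simp [Matrix.conjTranspose_apply, hA, SimpleGraph.adjMatrix_apply, G.adj_comm]
  set p : Fin n → ℝ := fun i => if i ∈ V then 1 else 0 with hp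
  set q : Fin n → ℝ := fun i => if i ∈ W then 1 else 0 with hq
  set P : Matrix (Fin n) (Fin n) ℝ := Matrix.diagonal p with hPdef
  set Q : Matrix (Fin n) (Fin n) ℝ := Matrix.diagonal q with hQdef
  have hnotboth : ∀ i, i ∈ V → i ∉ W := fun i hi => Finset.disjoint_left.mp hdisj hi
  have hnotboth' : ∀ i, i ∈ W → i ∉ V := fun i hi => Finset.disjoint_right.mp hdisj hi
  have hmem : ∀ i : Fin n, i ∈ V ∨ i ∈ W := by
    intro i
    have : i ∈ V ∪ W := hcover ▸ Finset.mem_univ i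
    exact Finset.mem_union.mp this
  have hPQ0 : P * Q = 0 := by
    rw [hPdef, hQdef, Matrix.diagonal_mul_diagonal]
    ext i j
    rcases hmem i with h | h
    · simp [Matrix.diagonal_apply, hp, hq, h, hnotboth i h]
    · simp [Matrix.diagonal_apply, hp, hq, h, hnotboth' i h]
  have hQP0 : Q * P = 0 := by
    rw [hPdef, hQdef, Matrix.diagonal_mul_diagonal]
    ext i j
    rcases hmem i with h | h
    · simp [Matrix.diagonal_apply, hp, hq, h, hnotboth i h]
    · simp [Matrix.diagonal_apply, hp, hq, h, hnotboth' i h]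
  have hPQ1 : P + Q = 1 := by
    rw [hPdef, hQdef, Matrix.diagonal_add, ← Matrix.diagonal_one]
    ext i j
    rcases hmem i with h | h
    · simp [Matrix.diagonal_apply, Matrix.one_apply, hp, hq, h, hnotboth i h]
    · simp [Matrix.diagonal_apply, Matrix.one_apply, hp, hq, h, hnotboth' i h]
  set B : Matrix (Fin n) (Fin n) ℝ := P * A * Q with hBdef
  have hPH : Pᴴ = P := by
    rw [hPdef, Matrix.diagonal_conjTranspose]
    congr 1
  have hQH : Qᴴ = Q := by
    rw [hQdef, Matrix.diagonal_conjTranspose]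
    congr 1
  have hBt : Bᴴ = Q * A * P := by
    rw [hBdef, Matrix.conjTranspose_mul, Matrix.conjTranspose_mul, hPH, hQH, hAH, mul_assoc]
  have hAB : A = B + Bᴴ := by
    rw [hBt, hBdef]
    ext u v
    have e1 : (P * A * Q) u v = p u * A u v * q v := by
      rw [Matrix.mul_diagonal, Matrix.diagonal_mul]
    have e2 : (Q * A * P) u v = q u * A u v * p v := by
      rw [Matrix.mul_diagonal, Matrix.diagonal_mul]
    rw [Matrix.add_apply, e1, e2]
    by_cases h : G.Adj u v
    · rcases hbip u v h with ⟨hu, hv⟩ | ⟨hu, hv⟩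
      · simp [hp, hq, hu, hv, hnotboth u hu]
      · simp [hp, hq, hu, hv, hnotboth v hv]
    · have h0 : A u v = 0 := by simp [hA, h]
      simp [h0]
  have hQB : Q * B = 0 := by
    rw [hBdef, ← mul_assoc, ← mul_assoc, hQP0, Matrix.zero_mul, Matrix.zero_mul]
  have hBP : B * P = 0 := by
    rw [hBdef, mul_assoc, mul_assoc, hQP0, Matrix.mul_zero, Matrix.mul_zero]
  have hS := Matrix.posSemidef_self_mul_conjTranspose B
  have hT := Matrix.posSemidef_conjTranspose_mul_self B
  set S := hS.sqrt with hSdef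
  set T := hT.sqrt with hTdef
  have hSps : S.PosSemidef := hS.posSemidef_sqrt
  have hTps : T.PosSemidef := hT.posSemidef_sqrt
  have hSH : Sᴴ = S := hSps.1
  have hTH : Tᴴ = T := hTps.1
  have hSS : S * S = B * Bᴴ := hS.sqrt_mul_self
  have hTT : T * T = Bᴴ * B := hT.sqrt_mul_self
  have hBtQ : Bᴴ * Q = 0 := by
    have := congrArg Matrix.conjTranspose hQB
    rwa [Matrix.conjTranspose_mul, hQH, Matrix.conjTranspose_zero] at this
  have hPBt : P * Bᴴ = 0 := by
    have := congrArg Matrix.conjTranspose hBP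
    rwa [Matrix.conjTranspose_mul, hPH, Matrix.conjTranspose_zero] at this
  have hQS : Q * S = 0 := by
    apply Matrix.self_mul_conjTranspose_eq_zero.mp
    rw [Matrix.conjTranspose_mul, hSH, hQH]
    calc Q * S * (S * Q) = Q * (S * S) * Q := by noncomm_ring
      _ = (Q * B) * (Bᴴ * Q) := by rw [hSS]; noncomm_ring
      _ = 0 := by rw [hQB, Matrix.zero_mul]
  have hPT : P * T = 0 := by
    apply Matrix.self_mul_conjTranspose_eq_zero.mp
    rw [Matrix.conjTranspose_mul, hTH, hPH]
    calc P * T * (T * P) = P * (T * T) * P := by noncomm_ring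
      _ = (P * Bᴴ) * (B * P) := by rw [hTT]; noncomm_ring
      _ = 0 := by rw [hPBt, Matrix.zero_mul]
  have hSQ : S * Q = 0 := by
    have := congrArg Matrix.conjTranspose hQS
    rwa [Matrix.conjTranspose_mul, hSH, hQH, Matrix.conjTranspose_zero] at this
  have hTP : T * P = 0 := by
    have := congrArg Matrix.conjTranspose hPT
    rwa [Matrix.conjTranspose_mul, hTH, hPH, Matrix.conjTranspose_zero] at this
  have hQT : Q * T = T := by
    conv_rhs => rw [← one_mul T, ← hPQ1]
    rw [Matrix.add_mul, hPT, zero_add]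
  have hPS : P * S = S := by
    conv_rhs => rw [← one_mul S, ← hPQ1]
    rw [Matrix.add_mul, hQS, add_zero]
  have hST : S * T = 0 := by
    rw [← hQT, ← mul_assoc, hSQ, Matrix.zero_mul]
  have hTS : T * S = 0 := by
    rw [← hPS, ← mul_assoc, hTP, Matrix.zero_mul]
  have hBB : B * B = 0 := by
    calc B * B = (P * A) * (Q * P) * (A * Q) := by rw [hBdef]; noncomm_ring
      _ = 0 := by rw [hQP0, Matrix.mul_zero, Matrix.zero_mul]
  have hBtBt : Bᴴ * Bᴴ = 0 := by
    have := congrArg Matrix.conjTranspose hBB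
    rwa [Matrix.conjTranspose_mul, Matrix.conjTranspose_zero] at this
  have hsum_sq : (S + T) ^ 2 = A * Aᴴ := by
    rw [pow_two, Matrix.add_mul, Matrix.mul_add, Matrix.mul_add, hST, hTS, hSS, hTT, hAH]
    conv_rhs => rw [hAB]
    rw [Matrix.add_mul, Matrix.mul_add, Matrix.mul_add, hBB, hBtBt]
    abel
  have key : (Matrix.posSemidef_self_mul_conjTranspose A).sqrt = S + T :=
    ((hSps.add hTps).eq_sqrt_of_sq_eq (Matrix.posSemidef_self_mul_conjTranspose A) hsum_sq).symm
  have hTdiagV : ∀ i ∈ V, T i i = 0 := by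
    intro i hi
    have h0 : (P * T) i i = 0 := by rw [hPT]; rfl
    rw [hPdef, Matrix.diagonal_mul] at h0
    simpa [hp, hi] using h0
  have hSdiagW : ∀ i ∈ W, S i i = 0 := by
    intro i hi
    have h0 : (Q * S) i i = 0 := by rw [hQS]; rfl
    rw [hQdef, Matrix.diagonal_mul] at h0
    simpa [hq, hi] using h0
  have hVE : ∀ i : Fin n, vertexEnergy G i = S i i + T i i := by
    intro i
    show (Matrix.posSemidef_self_mul_conjTranspose A).sqrt i i = _
    rw [key]; rfl
  have hsplitsum : ∀ X : Matrix (Fin n) (Fin n) ℝ,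
      X.trace = ∑ i ∈ V, X i i + ∑ i ∈ W, X i i := by
    intro X
    rw [← Finset.sum_union hdisj, hcover]
    rfl
  have hLHS : ∑ v ∈ V, vertexEnergy G v = S.trace := by
    rw [hsplitsum S, Finset.sum_eq_zero hSdiagW, add_zero]
    exact Finset.sum_congr rfl fun i hi => by rw [hVE, hTdiagV i hi, add_zero]
  have hRHS : ∑ w ∈ W, vertexEnergy G w = T.trace := by
    rw [hsplitsum T, Finset.sum_eq_zero (fun i hi => hTdiagV i hi), zero_add]
    exact Finset.sum_congr rfl fun i hi => by rw [hVE, hSdiagW i hi, zero_add]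
  rw [hLHS, hRHS, hSdef, hTdef]
  exact my_trace_sqrt_eq B
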